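/- For a k-partition P_k of the vertices of an edge-weighted graph with Vol(V)=1, the normalized Newman–Girvan modularity satisfies M_k(P_k) = k − 1 − Q_k(P_k), where Q_k(P_k) is the normalized k-way cut tr((D^{1/2} X̃(P_k))ᵀ (I − D^{-1/2} W D^{-1/2}) (D^{1/2} X̃(P_k))) with X̃(P_k) the matrix of normalized partition vectors. -/

import Mathlib

open Matrix BigOperators

/-- Newman–Girvan modularity and normalized cut: M_k(P_k) = k - 1 - Q_k(P_k). -/
theorem modularity_eq_k_sub_one_sub_cut {n k : ℕ} (W : Matrix (Fin n) (Fin n) ℝ)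
    (hsym : W.IsSymm) (hnn : ∀ i j, 0 ≤ W i j)
    (d : Fin n → ℝ) (hd : ∀ i, d i = ∑ j, W i j)
    (hdpos : ∀ i, 0 < d i) (hvol : ∑ i, d i = 1)
    (P : Fin n → Fin k) (hne : ∀ a : Fin k, ∃ j, P j = a)
    (Vol : Fin k → ℝ)
    (hVol : ∀ a, Vol a = ∑ j ∈ Finset.univ.filter (fun j => P j = a), d j)
    (X : Matrix (Fin n) (Fin k) ℝ)
    (hX : ∀ j a, X j a = if P j = a then 1 / Real.sqrt (Vol a) else 0)
    (Dhalf Mn : Matrix (Fin n) (Fin n) ℝ)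
    (hDhalf : Dhalf = Matrix.diagonal (fun i => Real.sqrt (d i)))
    (hMn : Mn = Matrix.of fun i j => W i j / (Real.sqrt (d i) * Real.sqrt (d j)))
    (M Q : ℝ)
    (hM : M = ∑ a : Fin k, (1 / Vol a) *
      ∑ i ∈ Finset.univ.filter (fun i => P i = a),
        ∑ j ∈ Finset.univ.filter (fun j => P j = a), (W i j - d i * d j))
    (hQ : Q = Matrix.trace ((Dhalf * X)ᵀ * (1 - Mn) * (Dhalf * X))) :
    M = (k : ℝ) - 1 - Q := by
  have hd0 : ∀ i, (0:ℝ) ≤ d i := fun i => (hdpos i).le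
  have hs0 : ∀ i, Real.sqrt (d i) ≠ 0 := fun i => (Real.sqrt_pos.2 (hdpos i)).ne'
  have hVolpos : ∀ a, 0 < Vol a := by
    intro a
    obtain ⟨j, hj⟩ := hne a
    rw [hVol]
    apply Finset.sum_pos'
    · intro i _; exact (hdpos i).le
    · exact ⟨j, Finset.mem_filter.2 ⟨Finset.mem_univ j, hj⟩, hdpos j⟩
  have hVol0 : ∀ a, Vol a ≠ 0 := fun a => (hVolpos a).ne'
  have hsV : ∀ a, Real.sqrt (Vol a) * Real.sqrt (Vol a) = Vol a :=
    fun a => Real.mul_self_sqrt (hVolpos a).le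
  have hsumVol : ∑ a, Vol a = 1 := by
    rw [← hvol]
    simp only [hVol]
    exact Finset.sum_fiberwise Finset.univ P d
  have hDD : Dhalf * Dhalf = Matrix.diagonal d := by
    rw [hDhalf, Matrix.diagonal_mul_diagonal]
    have : (fun i => Real.sqrt (d i) * Real.sqrt (d i)) = d :=
      funext fun i => Real.mul_self_sqrt (hd0 i)
    rw [this]
  have hDMD : Dhalf * Mn * Dhalf = W := by
    ext i j
    rw [hDhalf, hMn, Matrix.mul_diagonal, Matrix.diagonal_mul]
    simp only [Matrix.of_apply]
    field_simp
    rw [div_eq_iff (mul_ne_zero (hs0 i) (hs0 j))]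
    ring
  have hDT : Dhalfᵀ = Dhalf := by rw [hDhalf]; exact Matrix.diagonal_transpose _
  have hQ' : Q = Matrix.trace (Xᵀ * (Matrix.diagonal d * X))
      - Matrix.trace (Xᵀ * (W * X)) := by
    rw [hQ, Matrix.transpose_mul, hDT,
      show Xᵀ * Dhalf * (1 - Mn) * (Dhalf * X)
        = Xᵀ * (Dhalf * Dhalf * X) - Xᵀ * (Dhalf * Mn * Dhalf * X) by
          rw [Matrix.mul_sub, Matrix.mul_one, Matrix.sub_mul]
          simp only [Matrix.mul_assoc],
      hDD, hDMD, Matrix.trace_sub]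
  -- first trace
  have h1 : Matrix.trace (Xᵀ * (Matrix.diagonal d * X)) = (k : ℝ) := by
    rw [Matrix.trace]
    have hdiag : ∀ a : Fin k, (Xᵀ * (Matrix.diagonal d * X)).diag a = 1 := by
      intro a
      rw [Matrix.diag_apply, Matrix.mul_apply]
      have hterm : ∀ i, Xᵀ a i * (Matrix.diagonal d * X) i a
          = if P i = a then d i / Vol a else 0 := by
        intro i
        rw [Matrix.transpose_apply, Matrix.diagonal_mul, hX]
        split_ifs with h
        · have he : 1 / Real.sqrt (Vol a) * (d i * (1 / Real.sqrt (Vol a)))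
              = d i / (Real.sqrt (Vol a) * Real.sqrt (Vol a)) := by ring
          rw [he, hsV]
        · simp
      rw [Finset.sum_congr rfl (fun i _ => hterm i), ← Finset.sum_filter,
        ← Finset.sum_div, ← hVol, div_self (hVol0 a)]
    rw [Finset.sum_congr rfl (fun a _ => hdiag a)]
    simp
  -- second trace
  have h2 : Matrix.trace (Xᵀ * (W * X)) = ∑ a : Fin k, (1 / Vol a) *
      ∑ i ∈ Finset.univ.filter (fun i => P i = a),
        ∑ j ∈ Finset.univ.filter (fun j => P j = a), W i j := by
    rw [Matrix.trace]
    apply Finset.sum_congr rfl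
    intro a _
    rw [Matrix.diag_apply, Matrix.mul_apply]
    have hterm : ∀ i, Xᵀ a i * (W * X) i a
        = if P i = a then
            (∑ j ∈ Finset.univ.filter (fun j => P j = a), W i j) / Vol a
          else 0 := by
      intro i
      rw [Matrix.transpose_apply, Matrix.mul_apply, hX]
      split_ifs with h
      · have hj : ∀ j, W i j * X j a
            = if P j = a then W i j / Real.sqrt (Vol a) else 0 := by
          intro j
          rw [hX]
          split_ifs with h'
          · ring
          · simp
        rw [Finset.sum_congr rfl (fun j _ => hj j), ← Finset.sum_filter,
          ← Finset.sum_div]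
        have he : 1 / Real.sqrt (Vol a) *
            ((∑ j ∈ Finset.univ.filter (fun j => P j = a), W i j) / Real.sqrt (Vol a))
            = (∑ j ∈ Finset.univ.filter (fun j => P j = a), W i j)
              / (Real.sqrt (Vol a) * Real.sqrt (Vol a)) := by ring
        rw [he, hsV]
      · simp
    rw [Finset.sum_congr rfl (fun i _ => hterm i), ← Finset.sum_filter,
      ← Finset.sum_div]
    rw [div_eq_mul_inv, mul_comm, ← one_div]
  -- rewrite M
  have hM' : M = (∑ a : Fin k, (1 / Vol a) *
      ∑ i ∈ Finset.univ.filter (fun i => P i = a),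
        ∑ j ∈ Finset.univ.filter (fun j => P j = a), W i j) - 1 := by
    rw [hM]
    have key : ∀ a ∈ (Finset.univ : Finset (Fin k)), (1 / Vol a) *
        (∑ i ∈ Finset.univ.filter (fun i => P i = a),
          ∑ j ∈ Finset.univ.filter (fun j => P j = a), (W i j - d i * d j))
        = (1 / Vol a) * (∑ i ∈ Finset.univ.filter (fun i => P i = a),
            ∑ j ∈ Finset.univ.filter (fun j => P j = a), W i j) - Vol a := by
      intro a _
      have hsplit : ∑ i ∈ Finset.univ.filter (fun i => P i = a),
          ∑ j ∈ Finset.univ.filter (fun j => P j = a), (W i j - d i * d j)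
          = (∑ i ∈ Finset.univ.filter (fun i => P i = a),
              ∑ j ∈ Finset.univ.filter (fun j => P j = a), W i j) - Vol a * Vol a := by
        simp only [Finset.sum_sub_distrib]
        congr 1
        rw [hVol, Finset.sum_mul_sum]
      rw [hsplit, mul_sub]
      congr 1
      field_simp
    rw [Finset.sum_congr rfl key, Finset.sum_sub_distrib, hsumVol]
  rw [hM', hQ', h1, h2]
  ring
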